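/- Let P be the Lagrange projector at the points {(0,0,0), (0,1,0), (0,0,1), (1,0,1)} in F³ onto V = span{1, x₁, x₂, x₃}. Then the ideal of polynomials vanishing at these four points is generated by {x₁x₂, x₂x₃, x₁² − x₁, x₂² − x₂, x₃² − x₃, x₁x₃ − x₁}, and each generator has the form x^α − Σ_{β < α} c_β x^β with β < α in the componentwise order. -/

import Mathlib

open MvPolynomial

/-- `g` has the form `x^α - ∑_{β < α} c_β x^β` with all `β` strictly below `α` componentwise. -/
def HasLowerForm {F : Type*} [Field F] {d : ℕ} (g : MvPolynomial (Fin d) F)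
    (α : Fin d →₀ ℕ) : Prop :=
  ∃ (s : Finset (Fin d →₀ ℕ)) (c : (Fin d →₀ ℕ) → F),
    (∀ β ∈ s, β ≤ α ∧ β ≠ α) ∧ g = monomial α 1 - ∑ β ∈ s, monomial β (c β)

/-- `δ` is the leading exponent (exponent of the leading monomial) of `p` w.r.t. `m`. -/
def IsLeadExp {F : Type*} [Field F] {d : ℕ} (m : MonomialOrder (Fin d))
    (p : MvPolynomial (Fin d) F) (δ : Fin d →₀ ℕ) : Prop :=
  δ ∈ p.support ∧ ∀ β ∈ p.support, m.toSyn β ≤ m.toSyn δ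

/-- `G` is a Gröbner basis of `I` w.r.t. the monomial order `m`. -/
def IsGB {F : Type*} [Field F] {d : ℕ} (m : MonomialOrder (Fin d))
    (I : Ideal (MvPolynomial (Fin d) F)) (G : Set (MvPolynomial (Fin d) F)) : Prop :=
  G ⊆ (I : Set (MvPolynomial (Fin d) F)) ∧
    ∀ p ∈ I, p ≠ 0 → ∃ g ∈ G, ∃ δg δp, IsLeadExp m g δg ∧ IsLeadExp m p δp ∧ δg ≤ δp

/-- `G` is a reduced Gröbner basis of `I` w.r.t. `m`: a Gröbner basis of monic elements,
no term of any element being divisible by the leading monomial of another element. -/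
def IsReducedGB {F : Type*} [Field F] {d : ℕ} (m : MonomialOrder (Fin d))
    (I : Ideal (MvPolynomial (Fin d) F)) (G : Set (MvPolynomial (Fin d) F)) : Prop :=
  IsGB m I G ∧ ∀ g ∈ G, ∃ δ, IsLeadExp m g δ ∧ coeff δ g = 1 ∧
    ∀ g' ∈ G, g' ≠ g → ∀ β ∈ g.support, ∀ δ', IsLeadExp m g' δ' → ¬ δ' ≤ β

/-- The Gröbner éscalier associated to a (reduced) Gröbner basis `G`:
exponents of the monomials not divisible by any leading monomial of `G`. -/
def escalier {F : Type*} [Field F] {d : ℕ} (m : MonomialOrder (Fin d))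
    (G : Set (MvPolynomial (Fin d) F)) : Set (Fin d →₀ ℕ) :=
  {β | ∀ g ∈ G, ∀ δ, IsLeadExp m g δ → ¬ δ ≤ β}

/-- `α! = α₁!⋯α_d!`. -/
def nfact {d : ℕ} (α : Fin d →₀ ℕ) : ℕ := α.prod fun _ k => k.factorial

/-- The differential operator `D^α = ∂^{α₁}/∂x₁^{α₁} ⋯ ∂^{α_d}/∂x_d^{α_d}`. -/
noncomputable def Dpow (F : Type*) [Field F] {d : ℕ} (α : Fin d →₀ ℕ) :
    Module.End F (MvPolynomial (Fin d) F) :=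
  (List.ofFn fun i : Fin d =>
    ((MvPolynomial.pderiv i).toLinearMap : Module.End F (MvPolynomial (Fin d) F)) ^ α i).prod

/-- Example 3: the ideal of polynomials vanishing at the points
(0,0,0), (0,1,0), (0,0,1), (1,0,1) in F³ is generated by
{x₁x₂, x₂x₃, x₁²-x₁, x₂²-x₂, x₃²-x₃, x₁x₃-x₁}, and each generator has the form
x^α - Σ_{β<α} c_β x^β with β < α in the componentwise order. -/
theorem stmt17 {F : Type*} [Field F] [CharZero F]
    (pts : Fin 4 → (Fin 3 → F))
    (hpts : pts = ![![0, 0, 0], ![0, 1, 0], ![0, 0, 1], ![1, 0, 1]])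
    (gens : Set (MvPolynomial (Fin 3) F))
    (hgens : gens = {X 0 * X 1, X 1 * X 2, X 0 ^ 2 - X 0, X 1 ^ 2 - X 1,
      X 2 ^ 2 - X 2, X 0 * X 2 - X 0}) :
    (∀ f : MvPolynomial (Fin 3) F,
      f ∈ Ideal.span gens ↔ ∀ k, eval (pts k) f = 0) ∧
    (∀ g ∈ gens, ∃ α : Fin 3 →₀ ℕ, HasLowerForm g α) := by
  subst hpts hgens
  -- easy direction: everything in span vanishes
  have hvan : ∀ f ∈ Ideal.span ({X 0 * X 1, X 1 * X 2, X 0 ^ 2 - X 0, X 1 ^ 2 - X 1,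
      X 2 ^ 2 - X 2, X 0 * X 2 - X 0} : Set (MvPolynomial (Fin 3) F)),
      ∀ k : Fin 4, eval (![![0, 0, 0], ![0, 1, 0], ![0, 0, 1], ![1, 0, 1]] k) f = 0 := by
    intro f hf k
    have hle : Ideal.span ({X 0 * X 1, X 1 * X 2, X 0 ^ 2 - X 0, X 1 ^ 2 - X 1,
        X 2 ^ 2 - X 2, X 0 * X 2 - X 0} : Set (MvPolynomial (Fin 3) F)) ≤
        RingHom.ker (eval (![![0, 0, 0], ![0, 1, 0], ![0, 0, 1], ![1, 0, 1]] k) :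
          MvPolynomial (Fin 3) F →+* F) := by
      rw [Ideal.span_le]
      intro g hg
      simp only [Set.mem_insert_iff, Set.mem_singleton_iff] at hg
      rcases hg with rfl | rfl | rfl | rfl | rfl | rfl <;> fin_cases k <;>
        simp [RingHom.mem_ker]
    exact hle hf
  have g1 : (X 0 * X 1 : MvPolynomial (Fin 3) F) ∈ Ideal.span ({X 0 * X 1, X 1 * X 2,
      X 0 ^ 2 - X 0, X 1 ^ 2 - X 1, X 2 ^ 2 - X 2, X 0 * X 2 - X 0} :
      Set (MvPolynomial (Fin 3) F)) := Ideal.subset_span (by simp)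
  have g2 : (X 1 * X 2 : MvPolynomial (Fin 3) F) ∈ Ideal.span ({X 0 * X 1, X 1 * X 2,
      X 0 ^ 2 - X 0, X 1 ^ 2 - X 1, X 2 ^ 2 - X 2, X 0 * X 2 - X 0} :
      Set (MvPolynomial (Fin 3) F)) := Ideal.subset_span (by simp)
  have g3 : (X 0 ^ 2 - X 0 : MvPolynomial (Fin 3) F) ∈ Ideal.span ({X 0 * X 1, X 1 * X 2,
      X 0 ^ 2 - X 0, X 1 ^ 2 - X 1, X 2 ^ 2 - X 2, X 0 * X 2 - X 0} :
      Set (MvPolynomial (Fin 3) F)) := Ideal.subset_span (by simp)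
  have g4 : (X 1 ^ 2 - X 1 : MvPolynomial (Fin 3) F) ∈ Ideal.span ({X 0 * X 1, X 1 * X 2,
      X 0 ^ 2 - X 0, X 1 ^ 2 - X 1, X 2 ^ 2 - X 2, X 0 * X 2 - X 0} :
      Set (MvPolynomial (Fin 3) F)) := Ideal.subset_span (by simp)
  have g5 : (X 2 ^ 2 - X 2 : MvPolynomial (Fin 3) F) ∈ Ideal.span ({X 0 * X 1, X 1 * X 2,
      X 0 ^ 2 - X 0, X 1 ^ 2 - X 1, X 2 ^ 2 - X 2, X 0 * X 2 - X 0} :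
      Set (MvPolynomial (Fin 3) F)) := Ideal.subset_span (by simp)
  have g6 : (X 0 * X 2 - X 0 : MvPolynomial (Fin 3) F) ∈ Ideal.span ({X 0 * X 1, X 1 * X 2,
      X 0 ^ 2 - X 0, X 1 ^ 2 - X 1, X 2 ^ 2 - X 2, X 0 * X 2 - X 0} :
      Set (MvPolynomial (Fin 3) F)) := Ideal.subset_span (by simp)
  -- reduction to linear normal form
  have key : ∀ f : MvPolynomial (Fin 3) F, ∃ a b c d : F,
      f - (C a + C b * X 0 + C c * X 1 + C d * X 2) ∈ Ideal.span ({X 0 * X 1, X 1 * X 2,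
        X 0 ^ 2 - X 0, X 1 ^ 2 - X 1, X 2 ^ 2 - X 2, X 0 * X 2 - X 0} :
        Set (MvPolynomial (Fin 3) F)) := by
    intro f
    induction f using MvPolynomial.induction_on with
    | C a => exact ⟨a, 0, 0, 0, by simp⟩
    | add p q hp hq =>
      obtain ⟨a, b, c, d, hp⟩ := hp
      obtain ⟨a', b', c', d', hq⟩ := hq
      refine ⟨a + a', b + b', c + c', d + d', ?_⟩
      have heq : p + q - (C (a + a') + C (b + b') * X 0 + C (c + c') * X 1 + C (d + d') * X 2)
          = (p - (C a + C b * X 0 + C c * X 1 + C d * X 2))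
          + (q - (C a' + C b' * X 0 + C c' * X 1 + C d' * X 2)) := by
        simp only [map_add]; ring
      rw [heq]
      exact Ideal.add_mem _ hp hq
    | mul_X p i hp =>
      obtain ⟨a, b, c, d, hp⟩ := hp
      fin_cases i
      · refine ⟨0, a + b + d, 0, 0, ?_⟩
        show p * X 0 - (C 0 + C (a + b + d) * X 0 + C 0 * X 1 + C 0 * X 2) ∈ _
        have heq : p * X 0 - (C 0 + C (a + b + d) * X 0 + C 0 * X 1 + C 0 * X 2)
            = (p - (C a + C b * X 0 + C c * X 1 + C d * X 2)) * X 0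
            + (C b * (X 0 ^ 2 - X 0) + C c * (X 0 * X 1) + C d * (X 0 * X 2 - X 0)) := by
          simp only [map_add, map_zero]; ring
        rw [heq]
        exact Ideal.add_mem _ (Ideal.mul_mem_right _ _ hp)
          (Ideal.add_mem _ (Ideal.add_mem _ (Ideal.mul_mem_left _ _ g3)
            (Ideal.mul_mem_left _ _ g1)) (Ideal.mul_mem_left _ _ g6))
      · refine ⟨0, 0, a + c, 0, ?_⟩
        show p * X 1 - (C 0 + C 0 * X 0 + C (a + c) * X 1 + C 0 * X 2) ∈ _
        have heq : p * X 1 - (C 0 + C 0 * X 0 + C (a + c) * X 1 + C 0 * X 2)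
            = (p - (C a + C b * X 0 + C c * X 1 + C d * X 2)) * X 1
            + (C b * (X 0 * X 1) + C c * (X 1 ^ 2 - X 1) + C d * (X 1 * X 2)) := by
          simp only [map_add, map_zero]; ring
        rw [heq]
        exact Ideal.add_mem _ (Ideal.mul_mem_right _ _ hp)
          (Ideal.add_mem _ (Ideal.add_mem _ (Ideal.mul_mem_left _ _ g1)
            (Ideal.mul_mem_left _ _ g4)) (Ideal.mul_mem_left _ _ g2))
      · refine ⟨0, b, 0, a + d, ?_⟩
        show p * X 2 - (C 0 + C b * X 0 + C 0 * X 1 + C (a + d) * X 2) ∈ _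
        have heq : p * X 2 - (C 0 + C b * X 0 + C 0 * X 1 + C (a + d) * X 2)
            = (p - (C a + C b * X 0 + C c * X 1 + C d * X 2)) * X 2
            + (C b * (X 0 * X 2 - X 0) + C c * (X 1 * X 2) + C d * (X 2 ^ 2 - X 2)) := by
          simp only [map_add, map_zero]; ring
        rw [heq]
        exact Ideal.add_mem _ (Ideal.mul_mem_right _ _ hp)
          (Ideal.add_mem _ (Ideal.add_mem _ (Ideal.mul_mem_left _ _ g6)
            (Ideal.mul_mem_left _ _ g2)) (Ideal.mul_mem_left _ _ g5))
  constructor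
  · intro f
    constructor
    · exact hvan f
    · intro hf
      obtain ⟨a, b, c, d, hm⟩ := key f
      have hlin : ∀ k : Fin 4, eval (![![0, 0, 0], ![0, 1, 0], ![0, 0, 1], ![1, 0, 1]] k)
          (C a + C b * X 0 + C c * X 1 + C d * X 2 : MvPolynomial (Fin 3) F) = 0 := by
        intro k
        have h1 := hvan _ hm k
        have h2 := hf k
        simp only [map_sub] at h1
        rw [h2] at h1
        linear_combination -h1
      have e0 := hlin 0
      have e1 := hlin 1
      have e2 := hlin 2
      have e3 := hlin 3
      simp [Matrix.vecHead, Matrix.vecTail] at e0 e1 e2 e3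
      have ha : a = 0 := by linear_combination e0
      have hc : c = 0 := by linear_combination e1 - e0
      have hd : d = 0 := by linear_combination e2 - e0
      have hb : b = 0 := by linear_combination e3 - e2
      have : f - (C a + C b * X 0 + C c * X 1 + C d * X 2) = f := by
        rw [ha, hb, hc, hd]; simp
      rwa [this] at hm
  · intro g hg
    simp only [Set.mem_insert_iff, Set.mem_singleton_iff] at hg
    have hle1 : ∀ (i : Fin 3) (n m : ℕ), n ≤ m →
        (Finsupp.single i n : Fin 3 →₀ ℕ) ≤ Finsupp.single i m := by
      intro i n m h
      intro j
      simp only [Finsupp.single_apply]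
      split <;> simp [h]
    rcases hg with rfl | rfl | rfl | rfl | rfl | rfl
    · exact ⟨Finsupp.single 0 1 + Finsupp.single 1 1, ∅, fun _ => 0, by simp, by
        simp [X, monomial_mul]⟩
    · exact ⟨Finsupp.single 1 1 + Finsupp.single 2 1, ∅, fun _ => 0, by simp, by
        simp [X, monomial_mul]⟩
    · refine ⟨Finsupp.single 0 2, {Finsupp.single 0 1}, fun _ => 1, ?_, ?_⟩
      · intro β hβ
        simp only [Finset.mem_singleton] at hβ
        subst hβ
        refine ⟨hle1 0 1 2 (by norm_num), ?_⟩
        intro h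
        have := DFunLike.congr_fun h (0 : Fin 3)
        simp [Finsupp.single_apply] at this
      · rw [X_pow_eq_monomial]
        simp [X]
    · refine ⟨Finsupp.single 1 2, {Finsupp.single 1 1}, fun _ => 1, ?_, ?_⟩
      · intro β hβ
        simp only [Finset.mem_singleton] at hβ
        subst hβ
        refine ⟨hle1 1 1 2 (by norm_num), ?_⟩
        intro h
        have := DFunLike.congr_fun h (1 : Fin 3)
        simp [Finsupp.single_apply] at this
      · rw [X_pow_eq_monomial]
        simp [X]
    · refine ⟨Finsupp.single 2 2, {Finsupp.single 2 1}, fun _ => 1, ?_, ?_⟩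
      · intro β hβ
        simp only [Finset.mem_singleton] at hβ
        subst hβ
        refine ⟨hle1 2 1 2 (by norm_num), ?_⟩
        intro h
        have := DFunLike.congr_fun h (2 : Fin 3)
        simp [Finsupp.single_apply] at this
      · rw [X_pow_eq_monomial]
        simp [X]
    · refine ⟨Finsupp.single 0 1 + Finsupp.single 2 1, {Finsupp.single 0 1}, fun _ => 1, ?_, ?_⟩
      · intro β hβ
        simp only [Finset.mem_singleton] at hβ
        subst hβ
        constructor
        · exact le_add_of_nonneg_right zero_le
        · intro h
          have := DFunLike.congr_fun h (2 : Fin 3)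
          simp [Finsupp.single_apply] at this
      · simp [X, monomial_mul]
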